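/- Under finite rational accumulation of period h with limits a_1^{[e]} as above and A := ∏_{i=0}^{h−1} a_1^{[i]}, the radius of convergence r_P of P and R_P := 1/liminf|γ_n|^{1/n} satisfy r_P^h = R_P^h = |A|. In particular liminf and limsup of |γ_n|^{1/n} coincide. -/

import Mathlib

open Filter

/-- Tameness of a coefficient sequence: `γ n ≠ 0` and `u ≤ |γ (n-1) / γ n| ≤ v`
    for all `n ≥ N`. -/
def Tame (γ : ℕ → ℂ) (u v : ℝ) (N : ℕ) : Prop :=
  0 < u ∧ 0 < v ∧ (∀ n ≥ N, γ n ≠ 0) ∧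
    ∀ n ≥ N + 1, u ≤ ‖γ (n - 1) / γ n‖ ∧ ‖γ (n - 1) / γ n‖ ≤ v

/-- The opposite polynomial `X_n(P) = ∑_{k=0}^n (γ_{n-k}/γ_n) s^k`, viewed as its
    coefficient sequence in `ℂ[[s]] ≅ (ℕ → ℂ)` with the product topology. -/
noncomputable def oppPoly (γ : ℕ → ℂ) (n : ℕ) : ℕ → ℂ :=
  fun k => if k ≤ n then γ (n - k) / γ n else 0

/-- The space `Ω(P)` of opposite series: the set of cluster points of the sequence
    of opposite polynomials in the coefficientwise (product) topology. -/
def OmegaP (γ : ℕ → ℂ) : Set (ℕ → ℂ) :=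
  {a | MapClusterPt a atTop (oppPoly γ)}

open Filter Finset

lemma tendsto_of_residue_classes {α : Type*} (L : Filter α) (h : ℕ) (hpos : 0 < h)
    (f : ℕ → α) (H : ∀ r < h, Tendsto (fun m => f (r + h * m)) atTop L) :
    Tendsto f atTop L := by
  intro s hs
  rw [Filter.mem_map, mem_atTop_sets]
  choose M hM using fun r (hr : r < h) => mem_atTop_sets.1 ((H r hr) hs)
  classical
  set B := (Finset.range h).sup (fun r => if hr : r < h then M r hr else 0) with hB
  refine ⟨h * (B + 1), fun n hn => ?_⟩
  have hr : n % h < h := Nat.mod_lt _ hpos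
  have hrep : n % h + h * (n / h) = n := Nat.mod_add_div n h
  have hdiv : B ≤ n / h := by
    have : B + 1 ≤ n / h := (Nat.le_div_iff_mul_le hpos).2 (by rw [Nat.mul_comm]; exact hn)
    omega
  have hMle : M (n % h) hr ≤ B := by
    have := Finset.le_sup (f := fun r => if hr : r < h then M r hr else 0)
      (Finset.mem_range.2 hr)
    simpa [hr] using this
  have := hM (n % h) hr (n / h) (le_trans hMle hdiv)
  simpa [hrep] using this

lemma sum_range_zmod {h : ℕ} [NeZero h] (f : ZMod h → ℝ) :
    ∑ j ∈ Finset.range h, f (j : ZMod h) = ∑ i : ZMod h, f i := by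
  refine Finset.sum_nbij' (fun j => (j : ZMod h)) (fun i => i.val) ?_ ?_ ?_ ?_ ?_
  · intro j hj; exact Finset.mem_univ _
  · intro i _; exact Finset.mem_range.2 i.val_lt
  · intro j hj; exact ZMod.val_cast_of_lt (Finset.mem_range.1 hj)
  · intro i _; exact ZMod.natCast_zmod_val i
  · intro j hj; rfl

lemma sum_shift_zmod {h : ℕ} [NeZero h] (f : ZMod h → ℝ) (c : ZMod h) :
    ∑ i : ZMod h, f (i + c) = ∑ i : ZMod h, f i :=
  Fintype.sum_equiv (Equiv.addRight c) _ _ (fun _ => rfl)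


set_option maxHeartbeats 1000000 in

open Finset in
/-- Under finite rational accumulation of period `h` with `A = ∏ a₁^{[i]}`, one has
    `r_P^h = R_P^h = |A|`: both `limsup` and `liminf` of `|γ_n|^{1/n}` equal
    `|A|^{-1/h}` (in particular they coincide). -/
theorem radius_eq_of_finRatAccum (γ : ℕ → ℂ) (u v : ℝ) (N : ℕ) (htame : Tame γ u v N)
    (h : ℕ) (hpos : 0 < h) (a1 : ZMod h → ℂ) (ha1 : ∀ e, a1 e ≠ 0)
    (hlim : ∀ e : ZMod h,
      Tendsto (fun m => γ (e.val + h * m - 1) / γ (e.val + h * m)) atTop (nhds (a1 e))) :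
    limsup (fun n => ‖γ n‖ ^ (1 / (n : ℝ))) atTop
        = ‖∏ i ∈ range h, a1 (i : ℕ)‖ ^ (-(1 : ℝ) / h) ∧
    liminf (fun n => ‖γ n‖ ^ (1 / (n : ℝ))) atTop
        = ‖∏ i ∈ range h, a1 (i : ℕ)‖ ^ (-(1 : ℝ) / h) := by
  haveI : NeZero h := ⟨hpos.ne'⟩
  obtain ⟨hu, hv, hne, hbound⟩ := htame
  set g : ℕ → ℝ := fun n => Real.log ‖γ n‖ with hg
  set S : ℝ := ∑ i ∈ range h, Real.log ‖a1 (i : ℕ)‖ with hS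
  -- Step A: log-ratio convergence along each residue class
  have hA : ∀ e : ZMod h, Tendsto (fun m => g (e.val + h * m - 1) - g (e.val + h * m))
      atTop (nhds (Real.log ‖a1 e‖)) := by
    intro e
    have h1 : Tendsto (fun m => ‖γ (e.val + h * m - 1) / γ (e.val + h * m)‖) atTop
        (nhds ‖a1 e‖) := (hlim e).norm
    have h2 := ((Real.continuousAt_log (by simp [ha1 e])).tendsto).comp h1
    refine h2.congr' ?_
    filter_upwards [eventually_ge_atTop (N + 1)] with m hm
    have hml : N + 1 ≤ e.val + h * m := by
      have : m ≤ h * m := Nat.le_mul_of_pos_left m hpos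
      omega
    have hn1 : γ (e.val + h * m - 1) ≠ 0 := hne _ (by omega)
    have hn2 : γ (e.val + h * m) ≠ 0 := hne _ (by omega)
    simp only [Function.comp, norm_div]
    rw [Real.log_div (by simpa using hn1) (by simpa using hn2)]
  -- Step C: h-step log difference tends to S along residue class r
  have hC : ∀ r < h, Tendsto (fun m => g (r + h * m) - g (r + h * m + h)) atTop (nhds S) := by
    intro r hr
    have key : ∀ j ∈ range h, Tendsto (fun m => g (r + h * m + j) - g (r + h * m + (j + 1)))
        atTop (nhds (Real.log ‖a1 ((r + j + 1 : ℕ))‖)) := by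
      intro j _
      set e : ZMod h := ((r + j + 1 : ℕ) : ZMod h) with he
      have hev : e.val = (r + j + 1) % h := ZMod.val_natCast h _
      have hq : e.val + h * ((r + j + 1) / h) = r + j + 1 := by
        rw [hev]; exact Nat.mod_add_div _ _
      have := (hA e).comp (tendsto_add_atTop_nat ((r + j + 1) / h))
      refine this.congr (fun m => ?_)
      have hmul : h * (m + (r + j + 1) / h) = h * m + h * ((r + j + 1) / h) := Nat.mul_add _ _ _
      have hidx : e.val + h * (m + (r + j + 1) / h) = r + h * m + (j + 1) := by omega
      have hidx2 : r + h * m + (j + 1) - 1 = r + h * m + j := by omega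
      simp only [Function.comp]
      rw [hidx, hidx2]
    have hsum := tendsto_finset_sum (range h) key
    have htel : ∀ n, ∑ j ∈ range h, (g (n + j) - g (n + (j + 1))) = g n - g (n + h) := by
      intro n
      have := Finset.sum_range_sub (fun j => g (n + j)) h
      have h2 : ∑ j ∈ range h, (g (n + j) - g (n + (j + 1)))
          = -∑ j ∈ range h, (g (n + (j + 1)) - g (n + j)) := by
        rw [← Finset.sum_neg_distrib]; exact Finset.sum_congr rfl (fun j _ => by ring)
      rw [h2, this]; ring
    have hval : ∑ j ∈ range h, Real.log ‖a1 ((r + j + 1 : ℕ))‖ = S := by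
      have hcast : ∀ j : ℕ, ((r + j + 1 : ℕ) : ZMod h) = (j : ZMod h) + ((r + 1 : ℕ) : ZMod h) := by
        intro j; push_cast; ring
      calc ∑ j ∈ range h, Real.log ‖a1 ((r + j + 1 : ℕ))‖
          = ∑ j ∈ range h, (fun i : ZMod h => Real.log ‖a1 i‖) ((j : ZMod h) + ((r + 1 : ℕ) : ZMod h)) :=
            Finset.sum_congr rfl (fun j _ => by rw [hcast j])
        _ = ∑ i : ZMod h, Real.log ‖a1 (i + ((r + 1 : ℕ) : ZMod h))‖ :=
            sum_range_zmod (fun i => Real.log ‖a1 (i + ((r + 1 : ℕ) : ZMod h))‖)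
        _ = ∑ i : ZMod h, Real.log ‖a1 i‖ := sum_shift_zmod (fun i => Real.log ‖a1 i‖) ((r + 1 : ℕ) : ZMod h)
        _ = S := by rw [hS, sum_range_zmod (fun i => Real.log ‖a1 i‖)]
    rw [hval] at hsum
    refine hsum.congr (fun m => ?_)
    exact htel (r + h * m)
  -- Step D: Cesàro along each residue class
  have hD : ∀ r < h, Tendsto (fun m : ℕ => g (r + h * m) / m) atTop (nhds (-S)) := by
    intro r hr
    have hu' : Tendsto (fun m => g (r + h * m) - g (r + h * (m + 1))) atTop (nhds S) := by
      refine (hC r hr).congr (fun m => ?_)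
      congr 2
      rw [Nat.mul_succ]
      omega
    have hces := hu'.cesaro
    have htel : ∀ m : ℕ, ∑ k ∈ range m, (g (r + h * k) - g (r + h * (k + 1)))
        = g r - g (r + h * m) := by
      intro m
      have := Finset.sum_range_sub (fun k => g (r + h * k)) m
      have h2 : ∑ k ∈ range m, (g (r + h * k) - g (r + h * (k + 1)))
          = -∑ k ∈ range m, (g (r + h * (k + 1)) - g (r + h * k)) := by
        rw [← Finset.sum_neg_distrib]; exact Finset.sum_congr rfl (fun k _ => by ring)
      rw [h2, this]; simp
    simp only [htel] at hces
    have hzero : Tendsto (fun m : ℕ => g r / m) atTop (nhds 0) :=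
      tendsto_const_div_atTop_nhds_zero_nat _
    have hlim2 := hzero.sub hces
    rw [zero_sub] at hlim2
    refine hlim2.congr (fun m => ?_)
    rw [div_eq_mul_inv, div_eq_mul_inv]
    ring
  -- Step E/F: g n / n → -S / h
  have hF : Tendsto (fun n : ℕ => g n / n) atTop (nhds (-S / h)) := by
    refine tendsto_of_residue_classes _ h hpos _ (fun r hr => ?_)
    have hfrac : Tendsto (fun m : ℕ => (m : ℝ) / ((r : ℝ) + h * m)) atTop (nhds ((h : ℝ)⁻¹)) := by
      have h1 : Tendsto (fun m : ℕ => ((r : ℝ) + h * m) / m) atTop (nhds (h : ℝ)) := by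
        have h0 : Tendsto (fun m : ℕ => (r : ℝ) / m + h) atTop (nhds ((0 : ℝ) + h)) := by
          exact (tendsto_const_nhds.div_atTop tendsto_natCast_atTop_atTop).add tendsto_const_nhds
        rw [zero_add] at h0
        refine h0.congr' ?_
        filter_upwards [eventually_ge_atTop 1] with m hm
        have hm0 : (m : ℝ) ≠ 0 := Nat.cast_ne_zero.2 (by omega)
        field_simp
      have := h1.inv₀ (Nat.cast_ne_zero.2 hpos.ne')
      refine this.congr (fun m => ?_)
      rw [inv_div]
    have hmul := (hD r hr).mul hfrac
    rw [div_eq_mul_inv (-S)]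
    refine hmul.congr' ?_
    filter_upwards [eventually_ge_atTop 1] with m hm
    have hm0 : (m : ℝ) ≠ 0 := Nat.cast_ne_zero.2 (by omega)
    have hd0 : (r : ℝ) + h * m ≠ 0 := by
      have : (0 : ℝ) < h * m := by
        have h1 : (0 : ℝ) < (h : ℝ) := Nat.cast_pos.2 hpos
        have h2 : (0 : ℝ) < (m : ℝ) := Nat.cast_pos.2 (by omega)
        positivity
      positivity
    have hcast : ((r + h * m : ℕ) : ℝ) = (r : ℝ) + h * m := by push_cast; ring
    show g (r + h * m) / (m : ℝ) * ((m : ℝ) / ((r : ℝ) + h * m)) = g (r + h * m) / ((r + h * m : ℕ) : ℝ)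
    rw [hcast]
    field_simp
  -- Step G: conclude
  have hAne : (∏ i ∈ range h, a1 (i : ℕ)) ≠ 0 := Finset.prod_ne_zero_iff.2 (fun i _ => ha1 _)
  have hApos : 0 < ‖∏ i ∈ range h, a1 (i : ℕ)‖ := norm_pos_iff.2 hAne
  have hSlog : S = Real.log ‖∏ i ∈ range h, a1 (i : ℕ)‖ := by
    rw [norm_prod, Real.log_prod (fun i _ => by simpa using ha1 ((i : ℕ) : ZMod h))]
  have hexp : ‖∏ i ∈ range h, a1 (i : ℕ)‖ ^ (-(1 : ℝ) / h) = Real.exp (-S / h) := by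
    rw [Real.rpow_def_of_pos hApos, hSlog]
    ring_nf
  have hmain : Tendsto (fun n => ‖γ n‖ ^ (1 / (n : ℝ))) atTop
      (nhds (‖∏ i ∈ range h, a1 (i : ℕ)‖ ^ (-(1 : ℝ) / h))) := by
    rw [hexp]
    have := (Real.continuous_exp.tendsto (-S / h)).comp hF
    refine this.congr' ?_
    filter_upwards [eventually_ge_atTop N] with n hn
    have hpos' : 0 < ‖γ n‖ := norm_pos_iff.2 (hne n hn)
    simp only [Function.comp]
    rw [Real.rpow_def_of_pos hpos', mul_one_div]
  exact ⟨hmain.limsup_eq, hmain.liminf_eq⟩
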